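/- Let C : [0,∞) → ℝ be a nonnegative function satisfying C(0) ≥ 0 and C(0)·C(2t) ≥ C(t)² for all t > 0. If there exists t₁ > 0 such that C(t) = 0 for all t > t₁, then C(t) = 0 for all t > 0. -/
import Mathlib


theorem stmt16 (C : ℝ → ℝ) (hnonneg : ∀ t, 0 ≤ t → 0 ≤ C t)
    (hineq : ∀ t : ℝ, 0 < t → C t ^ 2 ≤ C 0 * C (2 * t))
    (t₁ : ℝ) (ht₁ : 0 < t₁) (hvanish : ∀ t, t₁ < t → C t = 0) :
    ∀ t : ℝ, 0 < t → C t = 0 := by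
  have key : ∀ n : ℕ, ∀ t : ℝ, 0 < t → t₁ < 2 ^ n * t → C t = 0 := by
    intro n
    induction n with
    | zero => intro t ht h; exact hvanish t (by simpa using h)
    | succ n ih =>
      intro t ht h
      have h2 : C (2 * t) = 0 := by
        apply ih (2 * t) (by linarith)
        calc t₁ < 2 ^ (n + 1) * t := h
          _ = 2 ^ n * (2 * t) := by ring
      have := hineq t ht
      rw [h2, mul_zero] at this
      have hsq : C t ^ 2 = 0 := le_antisymm this (sq_nonneg _)
      exact pow_eq_zero_iff (n := 2) (by norm_num) |>.mp hsq
  intro t ht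
  obtain ⟨n, hn⟩ := pow_unbounded_of_one_lt (t₁ / t) (by norm_num : (1:ℝ) < 2)
  exact key n t ht (by rwa [div_lt_iff₀ ht] at hn)
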